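/- There exists an integer ℓ₀ ≥ 1 such that for every integer ℓ ≥ ℓ₀ and every integer j with 0 ≤ j ≤ ℓ − 2: |μ_ℓ(j+2)|² ≤ e^{−2j/ℓ} |μ_ℓ(j)|², i.e. the coupled probabilities satisfy P_ℓ(j+2)/P_ℓ(j) ≤ e^{−2j/ℓ} ≤ 1 (whenever P_ℓ(j) > 0). -/

import Mathlib

open Complex Real

/-- The complex amplitude `μ_ℓ(j)`. -/
noncomputable def amp (ℓ : ℕ) (j : ℤ) : ℂ :=
  if j.natAbs ≤ ℓ then
    ∑ r ∈ Finset.range (ℓ - j.natAbs + 1),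
      if 2 ∣ ((ℓ : ℤ) - r + j) then
        (ℓ.choose r : ℂ) * ((ℓ - r).choose ((((ℓ : ℤ) - r + j) / 2).toNat) : ℂ) *
          (Complex.I / 2) ^ (ℓ - r) * (1 - Complex.I) ^ r
      else 0
  else 0

/-- The normalizing factor `Z_ℓ = Σ_{j=−ℓ}^{ℓ} |μ_ℓ(j)|²`. -/
noncomputable def Znorm (ℓ : ℕ) : ℝ :=
  ∑ j ∈ Finset.Icc (-(ℓ : ℤ)) (ℓ : ℤ), ‖amp ℓ j‖ ^ 2

/-- The coupled probabilities `P_ℓ(j) = |μ_ℓ(j)|²/Z_ℓ`. -/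
noncomputable def Pcoup (ℓ : ℕ) (j : ℤ) : ℝ := ‖amp ℓ j‖ ^ 2 / Znorm ℓ


/- ### Auxiliary development -/

open Polynomial

/-- The step polynomial `Q(X) = (i/2)X² + (1−i)X + i/2`. -/
noncomputable def Qpoly : Polynomial ℂ := C (I/2) * X ^ 2 + C (1 - I) * X + C (I/2)

/-- `aN ℓ m` is the coefficient of `X^(ℓ+m)` in `Q^ℓ`, i.e. `μ_ℓ(m)` for `m ≥ 0`. -/
noncomputable def aN (ℓ m : ℕ) : ℂ := (Qpoly ^ ℓ).coeff (ℓ + m)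

lemma coeff_sq_add_one_pow (n k : ℕ) :
    ((X ^ 2 + 1 : Polynomial ℂ) ^ n).coeff k = if 2 ∣ k then (n.choose (k / 2) : ℂ) else 0 := by
  rw [add_pow, finset_sum_coeff]
  have h : ∀ i ∈ Finset.range (n+1),
      ((X ^ 2 : Polynomial ℂ) ^ i * 1 ^ (n - i) * (n.choose i : Polynomial ℂ)).coeff k
        = if k = 2 * i then (n.choose i : ℂ) else 0 := by
    intro i _
    rw [one_pow, mul_one, ← pow_mul, ← C_eq_natCast, mul_comm, coeff_C_mul, coeff_X_pow]
    by_cases hk : k = 2 * i <;> simp [hk]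
  rw [Finset.sum_congr rfl h]
  by_cases hd : 2 ∣ k
  · obtain ⟨t, rfl⟩ := hd
    rw [if_pos ⟨t, rfl⟩]
    rw [Finset.sum_eq_single t]
    · simp [Nat.mul_div_cancel_left t (by norm_num : 0 < 2)]
    · intro i _ hne
      rw [if_neg (by omega)]
    · intro ht
      have : n < t := by simpa using ht
      simp [Nat.choose_eq_zero_of_lt this, Nat.mul_div_cancel_left t (by norm_num : 0 < 2)]
  · rw [if_neg hd, Finset.sum_eq_zero]
    intro i _
    exact if_neg (fun heq => hd ⟨i, heq⟩)

lemma natDegree_Qpoly_le : Qpoly.natDegree ≤ 2 := by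
  unfold Qpoly
  compute_degree

lemma aN_eq_zero (ℓ m : ℕ) (h : ℓ < m) : aN ℓ m = 0 := by
  apply coeff_eq_zero_of_natDegree_lt
  calc (Qpoly ^ ℓ).natDegree ≤ ℓ * Qpoly.natDegree := natDegree_pow_le
    _ ≤ ℓ * 2 := Nat.mul_le_mul_left ℓ natDegree_Qpoly_le
    _ < ℓ + m := by omega

lemma amp_eq_aN (ℓ m : ℕ) : amp ℓ (m : ℤ) = aN ℓ m := by
  by_cases hm : m ≤ ℓ
  · unfold amp aN
    rw [if_pos (by simpa using hm)]
    have hQ : Qpoly = C (1-I) * X + C (I/2) * (X ^ 2 + 1) := by unfold Qpoly; ring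
    rw [hQ, add_pow, finset_sum_coeff]
    have hterm : ∀ r ∈ Finset.range (ℓ+1),
        ((C (1-I) * X) ^ r * (C (I/2) * (X ^ 2 + 1)) ^ (ℓ - r) *
            (ℓ.choose r : Polynomial ℂ)).coeff (ℓ + m)
          = if 2 ∣ ((ℓ : ℤ) - r + m) then
              (ℓ.choose r : ℂ) * ((ℓ - r).choose ((((ℓ : ℤ) - r + m) / 2).toNat) : ℂ) *
                (Complex.I / 2) ^ (ℓ - r) * (1 - Complex.I) ^ r
            else 0 := by
      intro r hr
      rw [Finset.mem_range] at hr
      have hrℓ : r ≤ ℓ := by omega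
      have h1 : (C (1-I) * X) ^ r * (C (I/2) * (X ^ 2 + 1)) ^ (ℓ - r) *
            (ℓ.choose r : Polynomial ℂ)
          = C ((1-I) ^ r * (I/2) ^ (ℓ - r) * (ℓ.choose r : ℂ)) *
              (X ^ r * (X ^ 2 + 1) ^ (ℓ - r)) := by
        rw [← C_eq_natCast, mul_pow, mul_pow, ← C_pow, ← C_pow, C_mul, C_mul]; ring
      rw [h1, coeff_C_mul]
      have hidx : ℓ + m = (ℓ + m - r) + r := by omega
      rw [hidx, coeff_X_pow_mul, coeff_sq_add_one_pow]
      have hcast : ((ℓ : ℤ) - r + m) = ((ℓ + m - r : ℕ) : ℤ) := by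
        push_cast [Nat.cast_sub (by omega : r ≤ ℓ + m)]; ring
      have hdvd : (2 ∣ (ℓ + m - r : ℕ)) ↔ (2 ∣ ((ℓ : ℤ) - r + m)) := by
        rw [hcast]; exact_mod_cast (Int.natCast_dvd_natCast (m := 2)).symm
      by_cases hd : 2 ∣ (ℓ + m - r : ℕ)
      · rw [if_pos hd, if_pos (hdvd.mp hd)]
        have h2 : (((ℓ : ℤ) - r + m) / 2).toNat = (ℓ + m - r) / 2 := by
          rw [hcast]; omega
        rw [h2]; ring
      · rw [if_neg hd, if_neg (fun hc => hd (hdvd.mpr hc)), mul_zero]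
    rw [Finset.sum_congr rfl hterm]
    simp only [Int.natAbs_natCast]
    have hsub : Finset.range (ℓ - m + 1) ⊆ Finset.range (ℓ + 1) := by
      apply Finset.range_subset_range.mpr; omega
    apply Finset.sum_subset hsub
    intro r hr hnr
    rw [Finset.mem_range] at hr hnr
    have hrm : ℓ - m + 1 ≤ r := by omega
    by_cases hd : 2 ∣ ((ℓ : ℤ) - r + m)
    · rw [if_pos hd]
      have hcast : ((ℓ : ℤ) - r + m) = ((ℓ + m - r : ℕ) : ℤ) := by
        push_cast [Nat.cast_sub (by omega : r ≤ ℓ + m)]; ring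
      have h2 : (((ℓ : ℤ) - r + m) / 2).toNat = (ℓ + m - r) / 2 := by
        rw [hcast]; omega
      have hdn : 2 ∣ (ℓ + m - r : ℕ) := by
        rw [hcast] at hd; exact_mod_cast hd
      have hlt : ℓ - r < (ℓ + m - r) / 2 := by omega
      rw [h2, Nat.choose_eq_zero_of_lt hlt]
      simp
    · rw [if_neg hd]
  · unfold amp
    rw [if_neg (by simpa using hm : ¬ (m : ℤ).natAbs ≤ ℓ)]
    rw [aN_eq_zero ℓ m (by omega)]

lemma derivative_Qpoly : derivative Qpoly = C I * X + C (1 - I) := by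
  unfold Qpoly
  simp only [derivative_add, derivative_C_mul, derivative_X_pow, derivative_X, derivative_C,
    Nat.cast_ofNat, mul_one, add_zero]
  norm_num
  rw [← mul_assoc, ← C_mul]
  norm_num

/-- The three-term contiguous recurrence for the amplitudes. -/
lemma aN_rec (L j : ℕ) :
    ((L : ℂ) + 1 + j + 2) * aN (L+1) (j+2)
      = ((L : ℂ) + 1 - j) * aN (L+1) j + (2 + 2*I) * ((j : ℂ) + 1) * aN (L+1) (j+1) := by
  set ℓ := L + 1 with hℓ
  have hD : Qpoly * derivative (Qpoly ^ ℓ) = C ((ℓ : ℕ) : ℂ) * derivative Qpoly * Qpoly ^ ℓ := by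
    rw [derivative_pow]
    rw [hℓ]
    rw [show L + 1 - 1 = L from rfl]
    rw [show Qpoly ^ (L+1) = Qpoly ^ L * Qpoly from pow_succ Qpoly L]
    ring
  have hc := congrArg (fun p => p.coeff (L + j + 2)) hD
  have hL : Qpoly * derivative (Qpoly ^ ℓ)
      = C (I/2) * (X ^ 2 * derivative (Qpoly ^ ℓ)) + C (1-I) * (X * derivative (Qpoly ^ ℓ))
        + C (I/2) * derivative (Qpoly ^ ℓ) := by
    unfold Qpoly; ring
  have hR : C ((ℓ : ℕ) : ℂ) * derivative Qpoly * Qpoly ^ ℓ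
      = C ((ℓ : ℕ) : ℂ) * (C I * (X * Qpoly ^ ℓ)) + C ((ℓ : ℕ) : ℂ) * (C (1-I) * Qpoly ^ ℓ) := by
    rw [derivative_Qpoly]; ring
  rw [hL, hR] at hc
  simp only [coeff_add, coeff_C_mul] at hc
  rw [show L + j + 2 = (L + j) + 2 from rfl, coeff_X_pow_mul] at hc
  rw [show (L + j) + 2 = (L + j + 1) + 1 from rfl, coeff_X_mul, coeff_X_mul] at hc
  simp only [coeff_derivative] at hc
  have e0 : (Qpoly ^ ℓ).coeff (L + j + 1) = aN ℓ j := by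
    unfold aN; congr 1; omega
  have e1 : (Qpoly ^ ℓ).coeff (L + j + 1 + 1) = aN ℓ (j+1) := by
    unfold aN; congr 1; omega
  have e2 : (Qpoly ^ ℓ).coeff (L + j + 2 + 1) = aN ℓ (j+2) := by
    unfold aN; congr 1; omega
  rw [e0, e1, e2] at hc
  push_cast at hc ⊢
  have hℓc : (ℓ : ℂ) = L + 1 := by rw [hℓ]; push_cast; ring
  linear_combination (-2*(I*aN ℓ (j+1) + I^2*(aN ℓ j - aN ℓ (j+1)))) * hℓc + (-2*I) * hc +
    (((L:ℂ) + 1 + j + 2) * aN ℓ (j+2) + ((j:ℂ) - (L+1)) * aN ℓ j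
      - 2 * ((j:ℂ) + 1) * aN ℓ (j+1)) * Complex.I_sq

/-- `ζ_m = conj(μ_ℓ(m)) · μ_ℓ(m+1)`. -/
noncomputable def zet (ℓ m : ℕ) : ℂ := (starRingEnd ℂ) (aN ℓ m) * aN ℓ (m+1)

noncomputable def Gr (ℓ m : ℕ) : ℝ := -(zet ℓ m).re - (zet ℓ m).im
noncomputable def Hr (ℓ m : ℕ) : ℝ := -(zet ℓ m).re + (zet ℓ m).im

lemma zet_rec (L m : ℕ) :
    ((L : ℂ) + 1 + m + 2) * zet (L+1) (m+1)
      = ((L : ℂ) + 1 - m) * (starRingEnd ℂ) (zet (L+1) m)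
        + (2 + 2*I) * ((m : ℂ) + 1) * (Complex.normSq (aN (L+1) (m+1)) : ℂ) := by
  have hrec := aN_rec L m
  have hc : (starRingEnd ℂ) ((starRingEnd ℂ) (aN (L+1) m) * aN (L+1) (m+1))
      = aN (L+1) m * (starRingEnd ℂ) (aN (L+1) (m+1)) := by
    rw [map_mul, Complex.conj_conj]
  have hn : (Complex.normSq (aN (L+1) (m+1)) : ℂ)
      = (starRingEnd ℂ) (aN (L+1) (m+1)) * aN (L+1) (m+1) := Complex.normSq_eq_conj_mul_self
  unfold zet
  rw [hc, hn]
  linear_combination (starRingEnd ℂ) (aN (L+1) (m+1)) * hrec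

lemma zet_re_rec (L m : ℕ) :
    ((L : ℝ) + 1 + m + 2) * (zet (L+1) (m+1)).re
      = ((L : ℝ) + 1 - m) * (zet (L+1) m).re
        + 2 * ((m : ℝ) + 1) * Complex.normSq (aN (L+1) (m+1)) := by
  have h := congrArg Complex.re (zet_rec L m)
  simpa [Complex.add_re, Complex.mul_re, Complex.add_im, Complex.mul_im,
    Complex.conj_re, Complex.conj_im, Complex.ofReal_re, Complex.ofReal_im,
    Complex.natCast_re, Complex.natCast_im, Complex.I_re, Complex.I_im] using h

lemma zet_im_rec (L m : ℕ) :
    ((L : ℝ) + 1 + m + 2) * (zet (L+1) (m+1)).im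
      = -(((L : ℝ) + 1 - m) * (zet (L+1) m).im)
        + 2 * ((m : ℝ) + 1) * Complex.normSq (aN (L+1) (m+1)) := by
  have h := congrArg Complex.im (zet_rec L m)
  simpa [Complex.add_re, Complex.mul_re, Complex.add_im, Complex.mul_im,
    Complex.conj_re, Complex.conj_im, Complex.ofReal_re, Complex.ofReal_im,
    Complex.natCast_re, Complex.natCast_im, Complex.I_re, Complex.I_im] using h

/-- Downward induction: `G` and `H` are nonnegative. -/
lemma GH_nonneg (L : ℕ) : ∀ d m : ℕ, L + 1 ≤ m + d → 0 ≤ Gr (L+1) m ∧ 0 ≤ Hr (L+1) m := by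
  intro d
  induction d with
  | zero =>
    intro m hm
    have hz : zet (L+1) m = 0 := by
      unfold zet
      rw [aN_eq_zero (L+1) (m+1) (by omega)]
      ring
    constructor <;> simp [Gr, Hr, hz]
  | succ d ih =>
    intro m hm
    by_cases h : L + 1 ≤ m + d
    · exact ih m h
    · have hm1 : L + 1 ≤ (m + 1) + d := by omega
      have hmlt : m < L + 1 := by omega
      obtain ⟨hG1, hH1⟩ := ih (m+1) hm1
      have hre := zet_re_rec L m
      have him := zet_im_rec L m
      have hns : 0 ≤ Complex.normSq (aN (L+1) (m+1)) := Complex.normSq_nonneg _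
      have ha : (0:ℝ) < (L:ℝ) + 1 - m := by
        have : (m:ℝ) < (L:ℝ) + 1 := by exact_mod_cast hmlt
        linarith
      have hGid : ((L:ℝ) + 1 - m) * Gr (L+1) m = ((L:ℝ) + 1 + m + 2) * Hr (L+1) (m+1) := by
        unfold Gr Hr; linarith [hre, him]
      have hHid : ((L:ℝ) + 1 - m) * Hr (L+1) m
          = ((L:ℝ) + 1 + m + 2) * Gr (L+1) (m+1)
            + 4 * ((m:ℝ) + 1) * Complex.normSq (aN (L+1) (m+1)) := by
        unfold Gr Hr; linarith [hre, him]
      have hc : (0:ℝ) ≤ (L:ℝ) + 1 + m + 2 := by positivity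
      constructor
      · nlinarith [mul_nonneg hc hH1]
      · nlinarith [mul_nonneg hc hG1, mul_nonneg (mul_nonneg (by norm_num : (0:ℝ) ≤ 4)
          (by positivity : (0:ℝ) ≤ (m:ℝ)+1)) hns]

set_option maxHeartbeats 1000000

/-- Tail monotonicity: there is `ℓ₀ ≥ 1` such that for `ℓ ≥ ℓ₀` and `0 ≤ j ≤ ℓ − 2`,
`|μ_ℓ(j+2)|² ≤ e^{−2j/ℓ} |μ_ℓ(j)|²`; equivalently `P_ℓ(j+2) ≤ e^{−2j/ℓ} P_ℓ(j)`,
with `e^{−2j/ℓ} ≤ 1`. -/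
theorem amp_tail_ratio :
    ∃ ℓ₀ : ℕ, 1 ≤ ℓ₀ ∧
      ∀ ℓ : ℕ, ℓ₀ ≤ ℓ → ∀ j : ℕ, j + 2 ≤ ℓ →
        ‖amp ℓ ((j : ℤ) + 2)‖ ^ 2 ≤
            Real.exp (-2 * (j : ℝ) / ℓ) * ‖amp ℓ (j : ℤ)‖ ^ 2 ∧
          Pcoup ℓ ((j : ℤ) + 2) ≤ Real.exp (-2 * (j : ℝ) / ℓ) * Pcoup ℓ (j : ℤ) ∧
          Real.exp (-2 * (j : ℝ) / ℓ) ≤ 1 := by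
  refine ⟨1, le_refl 1, ?_⟩
  intro ℓ hℓ j hj
  obtain ⟨L, rfl⟩ : ∃ L, ℓ = L + 1 := ⟨ℓ - 1, by omega⟩
  have hcast2 : ((j : ℤ) + 2) = (((j+2 : ℕ)) : ℤ) := by push_cast; ring
  -- component equations from the recurrence
  have hrec := aN_rec L j
  have hr := congrArg Complex.re hrec
  have hi := congrArg Complex.im hrec
  simp only [Complex.add_re, Complex.mul_re, Complex.add_im, Complex.mul_im,
    Complex.conj_re, Complex.conj_im, Complex.ofReal_re, Complex.ofReal_im,
    Complex.natCast_re, Complex.natCast_im, Complex.I_re, Complex.I_im,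
    Complex.one_re, Complex.one_im, Complex.sub_re, Complex.sub_im,
    Complex.re_ofNat, Complex.im_ofNat] at hr hi
  set ur := (aN (L+1) j).re with hur
  set ui := (aN (L+1) j).im with hui
  set vr := (aN (L+1) (j+1)).re with hvr
  set vi := (aN (L+1) (j+1)).im with hvi
  set wr := (aN (L+1) (j+2)).re with hwr
  set wi := (aN (L+1) (j+2)).im with hwi
  set a : ℝ := (L : ℝ) + 1 - j with hadef
  set b : ℝ := (j : ℝ) + 1 with hbdef
  set c : ℝ := (L : ℝ) + 1 + j + 2 with hcdef
  -- Gr at j+1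
  have hG : Gr (L+1) (j+1) = -(vr * wr + vi * wi) - (vr * wi - vi * wr) := by
    unfold Gr zet
    simp only [Complex.mul_re, Complex.mul_im, Complex.conj_re, Complex.conj_im,
      ← hvr, ← hvi, ← hwr, ← hwi]
    ring
  have hGnn : 0 ≤ Gr (L+1) (j+1) := (GH_nonneg L (L+1) (j+1) (by omega)).1
  have hnsv : 0 ≤ Complex.normSq (aN (L+1) (j+1)) := Complex.normSq_nonneg _
  have hnsu : 0 ≤ Complex.normSq (aN (L+1) j) := Complex.normSq_nonneg _
  -- key identity
  have hid : c^2 * Complex.normSq (aN (L+1) (j+2))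
      = a^2 * Complex.normSq (aN (L+1) j) - 8*b^2 * Complex.normSq (aN (L+1) (j+1))
        - 4*b*c*Gr (L+1) (j+1) := by
    rw [hG]
    simp only [Complex.normSq_apply, ← hur, ← hui, ← hvr, ← hvi, ← hwr, ← hwi]
    linear_combination (c*wr + (a*ur + 2*b*vr - 2*b*vi) - 4*b*(vr - vi)) * hr
      + (c*wi + (a*ui + 2*b*vr + 2*b*vi) - 4*b*(vr + vi)) * hi
  have hbpos : (0:ℝ) < b := by positivity
  have hcpos : (0:ℝ) < c := by positivity
  have hkey : c^2 * Complex.normSq (aN (L+1) (j+2)) ≤ a^2 * Complex.normSq (aN (L+1) j) := by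
    nlinarith [mul_nonneg (mul_nonneg (mul_nonneg (by norm_num : (0:ℝ) ≤ 4) hbpos.le) hcpos.le) hGnn,
      mul_nonneg (mul_nonneg (by norm_num : (0:ℝ) ≤ 8) (sq_nonneg b)) hnsv]
  -- the exponential bound : a^2 ≤ E * c^2
  set E : ℝ := Real.exp (-2 * (j : ℝ) / ((L+1 : ℕ) : ℝ)) with hEdef
  have hEpos : 0 < E := Real.exp_pos _
  have hlpos : (0:ℝ) < ((L+1 : ℕ) : ℝ) := by positivity
  have hjl : (j : ℝ) ≤ ((L+1 : ℕ) : ℝ) := by exact_mod_cast (by omega : j ≤ L+1)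
  have hE : a^2 ≤ E * c^2 := by
    set lR : ℝ := ((L+1 : ℕ) : ℝ) with hlR
    have h1 : 1 - (j:ℝ)/lR ≤ Real.exp (-((j:ℝ)/lR)) := by
      have := Real.add_one_le_exp (-((j:ℝ)/lR)); linarith
    have h0 : 0 ≤ 1 - (j:ℝ)/lR := by
      have : (j:ℝ)/lR ≤ 1 := div_le_one_of_le₀ hjl hlpos.le
      linarith
    have hsq : (1 - (j:ℝ)/lR)^2 ≤ E := by
      have h2 : (1 - (j:ℝ)/lR)^2 ≤ Real.exp (-((j:ℝ)/lR))^2 :=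
        pow_le_pow_left₀ h0 h1 2
      have h3 : Real.exp (-((j:ℝ)/lR))^2 = E := by
        rw [hEdef, sq, ← Real.exp_add]
        congr 1
        ring
      linarith [h3 ▸ h2]
    have ha_eq : a = lR * (1 - (j:ℝ)/lR) := by
      have hne : lR ≠ 0 := ne_of_gt hlpos
      rw [hadef]
      field_simp
      rw [hlR]
      push_cast
      ring
    have hlc : lR ≤ c := by
      rw [hcdef, hlR]
      push_cast
      linarith [Nat.cast_nonneg (α := ℝ) j]
    calc a^2 = lR^2 * (1 - (j:ℝ)/lR)^2 := by rw [ha_eq]; ring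
      _ ≤ lR^2 * E := mul_le_mul_of_nonneg_left hsq (sq_nonneg lR)
      _ ≤ c^2 * E := by
          have hc2 : lR^2 ≤ c^2 := by nlinarith [hlc, hlpos]
          exact mul_le_mul_of_nonneg_right hc2 hEpos.le
      _ = E * c^2 := mul_comm _ _
  -- conclude the normSq inequality
  have hmain : Complex.normSq (aN (L+1) (j+2)) ≤ E * Complex.normSq (aN (L+1) j) := by
    have h4 : c^2 * Complex.normSq (aN (L+1) (j+2))
        ≤ c^2 * (E * Complex.normSq (aN (L+1) j)) := by
      calc c^2 * Complex.normSq (aN (L+1) (j+2)) ≤ a^2 * Complex.normSq (aN (L+1) j) := hkey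
        _ ≤ (E * c^2) * Complex.normSq (aN (L+1) j) := by nlinarith
        _ = c^2 * (E * Complex.normSq (aN (L+1) j)) := by ring
    exact le_of_mul_le_mul_left h4 (by positivity)
  have habs : ‖amp (L+1) ((j : ℤ) + 2)‖ ^ 2
      ≤ E * ‖amp (L+1) (j : ℤ)‖ ^ 2 := by
    rw [hcast2, amp_eq_aN, amp_eq_aN, Complex.sq_norm, Complex.sq_norm]
    exact hmain
  refine ⟨habs, ?_, ?_⟩
  · -- Pcoup
    unfold Pcoup
    have hZ : 0 ≤ Znorm (L+1) := by
      unfold Znorm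
      apply Finset.sum_nonneg
      intro i _
      positivity
    rcases eq_or_lt_of_le hZ with hZ0 | hZpos
    · rw [← hZ0]
      simp
    · rw [← mul_div_assoc]
      exact (div_le_div_iff_of_pos_right hZpos).mpr habs
  · -- exp ≤ 1
    have hx : -2 * (j:ℝ) / ((L+1:ℕ):ℝ) ≤ 0 :=
      div_nonpos_of_nonpos_of_nonneg (by nlinarith [Nat.cast_nonneg (α := ℝ) j]) hlpos.le
    calc Real.exp (-2 * (j:ℝ) / ((L+1:ℕ):ℝ)) ≤ Real.exp 0 := Real.exp_le_exp.mpr hx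
      _ = 1 := Real.exp_zero
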